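/- Let M, N, Q be maps on a vector space X with Q invertible linear, and λ ≠ 0 a scalar such that I + λNQ⁻¹ and I + λMQ⁻¹ are bijective on X. Then for x ∈ X, the equation Mx + Nx = 0 holds if and only if Qx is a fixed point of the map (I + λMQ⁻¹)⁻¹(I − λNQ⁻¹)(I + λNQ⁻¹)⁻¹(I − λMQ⁻¹), i.e. x = Q⁻¹(I + λMQ⁻¹)⁻¹(I − λNQ⁻¹)(I + λNQ⁻¹)⁻¹(I − λMQ⁻¹)Qx. -/
import Mathlib


theorem stmt14 {X : Type*} [AddCommGroup X] [Module ℝ X]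
    (Q : X ≃ₗ[ℝ] X) (M N : X → X)
    (lam : ℝ) (hlam : lam ≠ 0)
    (P₁inv P₂inv : X → X)
    (hP₁₁ : ∀ x : X, P₁inv x + lam • M (Q.symm (P₁inv x)) = x)
    (hP₁₂ : ∀ x : X, P₁inv (x + lam • M (Q.symm x)) = x)
    (hP₂₁ : ∀ x : X, P₂inv x + lam • N (Q.symm (P₂inv x)) = x)
    (hP₂₂ : ∀ x : X, P₂inv (x + lam • N (Q.symm x)) = x)
    (x : X) :
    M x + N x = 0 ↔
      x = Q.symm (P₁inv
        ((fun y => y - lam • N (Q.symm y))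
          (P₂inv ((fun y => y - lam • M (Q.symm y)) (Q x))))) := by
  constructor
  · intro h
    have hN : N x = -M x := eq_neg_of_add_eq_zero_right h
    simp only [LinearEquiv.symm_apply_apply]
    have e1 : Q x - lam • M x = Q x + lam • N x := by rw [hN]; module
    rw [e1]
    have e2 : P₂inv (Q x + lam • N x) = Q x := by
      have := hP₂₂ (Q x); simpa using this
    rw [e2]
    simp only [LinearEquiv.symm_apply_apply]
    have e3 : Q x - lam • N x = Q x + lam • M x := by rw [hN]; module
    rw [e3]
    have e4 : P₁inv (Q x + lam • M x) = Q x := by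
      have := hP₁₂ (Q x); simpa using this
    rw [e4, LinearEquiv.symm_apply_apply]
  · intro h
    simp only [LinearEquiv.symm_apply_apply] at h
    set b := P₂inv (Q x - lam • M x) with hb
    have hq : Q x = P₁inv (b - lam • N (Q.symm b)) := by
      conv_lhs => rw [h]
      rw [Q.apply_symm_apply]
    have e2 : b + lam • N (Q.symm b) = Q x - lam • M x := hP₂₁ _
    have e1' : Q x + lam • M x = b - lam • N (Q.symm b) := by
      have := hP₁₁ (b - lam • N (Q.symm b))
      rw [← hq, LinearEquiv.symm_apply_apply] at this
      linear_combination (norm := module) this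
    have h3 : Q x + lam • M x + (b + lam • N (Q.symm b)) =
        (b - lam • N (Q.symm b)) + (Q x - lam • M x) := by rw [e1', e2]
    have h4 : (2 : ℝ) • (lam • (M x + N (Q.symm b))) =
        (Q x + lam • M x + (b + lam • N (Q.symm b))) -
          ((b - lam • N (Q.symm b)) + (Q x - lam • M x)) := by module
    rw [h3, sub_self] at h4
    have key : M x + N (Q.symm b) = 0 := by
      rcases smul_eq_zero.mp h4 with h' | h'
      · norm_num at h'
      · rcases smul_eq_zero.mp h' with h'' | h''
        · exact absurd h'' hlam
        · exact h''
    have hnb : N (Q.symm b) = -M x := eq_neg_of_add_eq_zero_right key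
    have hbQ : b = Q x := by
      have := e2
      rw [hnb] at this
      have : b = Q x := by linear_combination (norm := module) this
      exact this
    rw [hbQ, LinearEquiv.symm_apply_apply] at key
    exact key
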